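/- Let X be a finite set and b a partition of X. If p, p', p'' are partitions of X such that p' ⊣_b p'' and p'' ⊐_b p, then p'' = p∧p', the coarsest partition of X that is finer than both p and p'. -/

import Mathlib

open Sum
open scoped Classical

noncomputable section

namespace PartitionPaper

variable {X : Type*}

/-- The number of blocks of a partition of `X`, encoded as a setoid on `X`. -/
def nc (p : Setoid X) : ℕ := Nat.card (Quotient p)

/-- The geodesic distance `d(p,p') = (nc p + nc p')/2 - nc (p ⊔ p')`. -/
def pdist (p q : Setoid X) : ℚ :=
  ((nc p : ℚ) + (nc q : ℚ)) / 2 - (nc (p ⊔ q) : ℚ)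

/-- Geodesic order with base partition `b` : `p' ≤_b p`. -/
def geoLE (b p' p : Setoid X) : Prop := pdist b p' + pdist p' p = pdist b p

/-- Coarser-compatible order `p' ⊣_b p` : `p'` coarser than `p` and
`nc (p' ⊔ b) = nc (p ⊔ b)`.  (In the setoid lattice, `p ≤ p'` means `p` is finer.) -/
def coarserComp (b p' p : Setoid X) : Prop :=
  p ≤ p' ∧ nc (p' ⊔ b) = nc (p ⊔ b)

/-- Finer-compatible order `p' ⊐_b p` : `p'` finer than `p` and
`nc p' - nc (p' ⊔ b) = nc p - nc (p ⊔ b)`. -/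
def finerComp (b p' p : Setoid X) : Prop :=
  p' ≤ p ∧ (nc p' : ℤ) - (nc (p' ⊔ b) : ℤ) = (nc p : ℤ) - (nc (p ⊔ b) : ℤ)

/-- `p'` is obtained from `p` by gluing two blocks of `p` into one. -/
def IsGluing (p p' : Setoid X) : Prop := p ≤ p' ∧ nc p' + 1 = nc p

/-- The Cayley graph on partitions of `X`: an edge iff one partition is obtained
from the other by gluing two of its blocks into one. -/
def glueGraph (X : Type*) : SimpleGraph (Setoid X) where
  Adj p q := IsGluing p q ∨ IsGluing q p
  symm := ⟨fun _ _ h => h.elim Or.inr Or.inl⟩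
  loopless := by
    refine ⟨?_⟩
    intro p h
    rcases h with ⟨-, h⟩ | ⟨-, h⟩ <;> omega

/-- The segment `[p₁, p₂]` for the geodesic distance. -/
def seg (p₁ p₂ : Setoid X) : Set (Setoid X) :=
  {p | pdist p₁ p + pdist p p₂ = pdist p₁ p₂}

/-- The defect of `p'` from being on `[b, p]`. -/
def df (b p' p : Setoid X) : ℚ := pdist b p' + pdist p' p - pdist b p

/-- Admissible one-step splits: `p'` is obtained by cutting a (pivotal) block of `p`
into two blocks in such a way that the join with `b` gains one block. -/
def Delta (b p : Setoid X) : Set (Setoid X) :=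
  {p' | p' ≤ p ∧ nc p' = nc p + 1 ∧ nc (p' ⊔ b) = nc (p ⊔ b) + 1}

/-- The admissible splits `Sp_b(p) = ⋃ₘ Δ_b^m(p)`. -/
def Sp (b p : Setoid X) : Set (Setoid X) :=
  {p' | Relation.ReflTransGen (fun u v => v ∈ Delta b u) p p'}

/-- The admissible gluings `Gl_b(p)`: partitions obtained by gluing blocks of `p`
without altering the number of blocks of the join with `b`. -/
def Gl (b p : Setoid X) : Set (Setoid X) :=
  {p' | p ≤ p' ∧ nc (p' ⊔ b) = nc (p ⊔ b)}

/-- `p'` is directly smaller than `p` for the relation `r`. -/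
def DirectlySmaller (r : Setoid X → Setoid X → Prop) (p' p : Setoid X) : Prop :=
  r p' p ∧ p' ≠ p ∧ ¬ ∃ p'', p'' ≠ p ∧ p'' ≠ p' ∧ r p' p'' ∧ r p'' p

/-- The block of the partition `p` corresponding to a class `c`. -/
def blockSet (p : Setoid X) (c : Quotient p) : Set X := {x | Quotient.mk p x = c}

/-- The number of blocks of `q` contained in the block `c` of `p`. -/
def numSubBlocks (q p : Setoid X) (c : Quotient p) : ℕ :=
  Nat.card {d : Quotient q // blockSet q d ⊆ blockSet p c}

/-- The number of blocks of `p` containing exactly `i` blocks of `q`. -/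
def rcount (q p : Setoid X) (i : ℕ) : ℕ :=
  Nat.card {c : Quotient p // numSubBlocks q p c = i}

/-- The Möbius function of the refinement order:
`μ_f(q,p) = (-1)^(nc q - nc p) ∏_i ((i-1)!)^(r_i)` for `q` finer than `p`. -/
def muf (q p : Setoid X) : ℤ :=
  (-1) ^ (nc q - nc p) *
    ∏ i ∈ Finset.range (nc q + 1), ((Nat.factorial (i - 1) : ℤ)) ^ (rcount q p i)

/-- `P_k`: partitions of `{1,…,k} ∪ {1',…,k'}`, the left summand being the
unprimed (top) row and the right summand the primed (bottom) row. -/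
abbrev Pk (k : ℕ) := Setoid (Fin k ⊕ Fin k)

/-- The identity partition `id_k = {{i, i'} : 1 ≤ i ≤ k}`. -/
def idk (k : ℕ) : Pk k := Setoid.ker (Sum.elim id id)

/-- The permutation partition associated with `σ`, with blocks `{i, σ(i)'}`. -/
def permPartition {k : ℕ} (σ : Equiv.Perm (Fin k)) : Pk k :=
  Setoid.ker (Sum.elim id σ.symm)

/-- `S_k`, the set of permutation partitions. -/
def Sk (k : ℕ) : Set (Pk k) := Set.range (permPartition (k := k))

/-- `B_k`, the set of Brauer partitions: all blocks have exactly two elements. -/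
def Bk (k : ℕ) : Set (Pk k) := {p | ∀ x, Nat.card {y | p.r x y} = 2}

/-- Embedding of the top/bottom rows of the upper diagram `q` into the
three-row diagram (top ⊕ (middle ⊕ bottom)). -/
def upMap (k : ℕ) : Fin k ⊕ Fin k → Fin k ⊕ (Fin k ⊕ Fin k) :=
  Sum.elim Sum.inl (fun i => Sum.inr (Sum.inl i))

/-- Embedding of the top/bottom rows of the lower diagram `p` into the
three-row diagram. -/
def downMap (k : ℕ) : Fin k ⊕ Fin k → Fin k ⊕ (Fin k ⊕ Fin k) :=
  Sum.elim (fun i => Sum.inr (Sum.inl i)) (fun i => Sum.inr (Sum.inr i))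

/-- The partition of the three-row diagram obtained by stacking a diagram of `q`
on top of a diagram of `p` (identifying the bottom row of `q` with the top row
of `p`): the equivalence relation generated by the copies of `q` and `p`. -/
def stackSetoid {k : ℕ} (p q : Pk k) : Setoid (Fin k ⊕ (Fin k ⊕ Fin k)) :=
  sInf {s | ∀ x y,
    ((∃ a b, upMap k a = x ∧ upMap k b = y ∧ q.r a b) ∨
     (∃ a b, downMap k a = x ∧ downMap k b = y ∧ p.r a b)) → s.r x y}

/-- The composition `p ∘ q` (a diagram of `q` stacked above a diagram of `p`),
obtained by restricting the stacked partition to the outer rows. -/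
def comp {k : ℕ} (p q : Pk k) : Pk k :=
  Setoid.comap (Sum.elim Sum.inl (fun i => Sum.inr (Sum.inr i))) (stackSetoid p q)

/-- `κ(p,q)`: the number of connected components of the stacked diagram entirely
contained in the middle row. -/
def kappaP {k : ℕ} (p q : Pk k) : ℕ :=
  Nat.card {c : Quotient (stackSetoid p q) //
    ∀ x, Quotient.mk (stackSetoid p q) x = c → ∃ i : Fin k, x = Sum.inr (Sum.inl i)}

/-- The transpose `ᵗp`, exchanging the two rows. -/
def transpose {k : ℕ} (p : Pk k) : Pk k := Setoid.comap Sum.swap p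

/-- The disjoint-union partition on a sum type. -/
def sumSetoid {α β : Type*} (p : Setoid α) (q : Setoid β) : Setoid (α ⊕ β) :=
  Setoid.ker (Sum.map (Quotient.mk p) (Quotient.mk q))

/-- Reindexing of the rows for the tensor product. -/
def reindex (k l : ℕ) :
    Fin (k + l) ⊕ Fin (k + l) → (Fin k ⊕ Fin k) ⊕ (Fin l ⊕ Fin l) :=
  Sum.elim
    (fun j => Sum.elim (fun a => Sum.inl (Sum.inl a)) (fun b => Sum.inr (Sum.inl b))
      (finSumFinEquiv.symm j))
    (fun j => Sum.elim (fun a => Sum.inl (Sum.inr a)) (fun b => Sum.inr (Sum.inr b))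
      (finSumFinEquiv.symm j))

/-- The tensor product `p ⊗ q ∈ P_{k+l}`: a diagram of `p` placed to the left of
a diagram of `q`. -/
def tensor {k l : ℕ} (p : Pk k) (q : Pk l) : Pk (k + l) :=
  Setoid.comap (reindex k l) (sumSetoid p q)

/-- The `≺`-defect `η(p,q)`. -/
def eta {k : ℕ} (p q : Pk k) : ℚ :=
  pdist (idk k) p + pdist (idk k) q - pdist (idk k) (comp p q)
    - ((k : ℚ) + (nc (comp p q) : ℚ) - (nc p : ℚ) - (nc q : ℚ)) / 2 - (kappaP p q : ℚ)

/-- The Kreweras complement of `p'` in `p`: the set of `p''` with `p = p' ∘ p''`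
realizing equality in the `≺`-defect inequality. -/
def Krew {k : ℕ} (p p' : Pk k) : Set (Pk k) :=
  {p'' | comp p' p'' = p ∧ eta p' p'' = 0}

/-- `p' ≺ p` : `p'` is an admissible prefix of `p`. -/
def prec {k : ℕ} (p' p : Pk k) : Prop :=
  ∃ p'', comp p' p'' = p ∧ eta p' p'' = 0

/-- The partition of `{1,…,k}` into the orbits (cycles) of the permutation `σ`. -/
def cycleSetoid {k : ℕ} (σ : Equiv.Perm (Fin k)) : Setoid (Fin k) :=
  ⟨σ.SameCycle,
    ⟨fun x => Equiv.Perm.SameCycle.refl σ x, fun h => h.symm, fun h₁ h₂ => h₁.trans h₂⟩⟩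

/-- A partition of `{1,…,k}` is non-crossing if there are no `a < b < c < d` with
`a, c` in one block and `b, d` in a different block. -/
def NonCrossing {k : ℕ} (π : Setoid (Fin k)) : Prop :=
  ¬ ∃ a b c d : Fin k, a < b ∧ b < c ∧ c < d ∧ π.r a c ∧ π.r b d ∧ ¬ π.r a b

/-- The map sending a permutation partition to the partition of `{1,…,k}` into
the orbits of the corresponding bijection (the blocks of `p ⊔ id_k` restricted
to the top row). -/
def orbitMap {k : ℕ} (p : Pk k) : Setoid (Fin k) :=
  Setoid.comap (Sum.inl : Fin k → Fin k ⊕ Fin k) (p ⊔ idk k)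

/-- The permutation `(1,k+1)(2,k+2)⋯(k,2k)` of `{1,…,2k}`. -/
def tauPerm (k : ℕ) : Equiv.Perm (Fin (k + k)) :=
  (finSumFinEquiv.symm.trans (Equiv.sumComm (Fin k) (Fin k))).trans finSumFinEquiv

/-- The left part of a partition in `P_{k₁+k₂}`. -/
def leftPart {k₁ k₂ : ℕ} (p : Pk (k₁ + k₂)) : Pk k₁ :=
  Setoid.comap (Sum.map (Fin.castAdd k₂) (Fin.castAdd k₂)) p

/-- The right part of a partition in `P_{k₁+k₂}`. -/
def rightPart {k₁ k₂ : ℕ} (p : Pk (k₁ + k₂)) : Pk k₂ :=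
  Setoid.comap (Sum.map (Fin.natAdd k₁) (Fin.natAdd k₁)) p

/-- The `p`-moment `m_p(E_N) = Tr_N(E_N ᵗp)/N^{nc(p ⊔ id_k)}
`= ∑_{p'} (E_N)_{p'} N^{nc(p ⊔ p') - nc(p ⊔ id_k)}`. -/
def momentF {k : ℕ} (E : ℕ → Pk k → ℂ) (p : Pk k) (N : ℕ) : ℂ :=
  ∑ᶠ p' : Pk k, E N p' * (N : ℂ) ^ ((nc (p ⊔ p') : ℤ) - (nc (p ⊔ idk k) : ℤ))

/-- The `p`-cumulant `κ_p(E_N) = N^{nc p - nc (p ⊔ id_k)} (E_N)_p`. -/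
def cumulantF {k : ℕ} (E : ℕ → Pk k → ℂ) (p : Pk k) (N : ℕ) : ℂ :=
  (N : ℂ) ^ ((nc p : ℤ) - (nc (p ⊔ idk k) : ℤ)) * E N p

def pairSetoid (x y : X) : Setoid X where
  r z w := z = w ∨ (z = x ∧ w = y) ∨ (z = y ∧ w = x)
  iseqv := by
    constructor
    · intro z; exact Or.inl rfl
    · intro a b h; tauto
    · intro a b c h1 h2
      rcases h1 with h1 | ⟨h1a, h1b⟩ | ⟨h1a, h1b⟩ <;>
        rcases h2 with h2 | ⟨h2a, h2b⟩ | ⟨h2a, h2b⟩ <;> subst_vars <;> tauto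

def pairJoin (s : Setoid X) (x y : X) : Setoid X where
  r z w := s.r z w ∨ (s.r z x ∧ s.r y w) ∨ (s.r z y ∧ s.r x w)
  iseqv := by
    constructor
    · intro z; exact Or.inl (s.refl z)
    · rintro a b (h | ⟨h1, h2⟩ | ⟨h1, h2⟩)
      · exact Or.inl (s.symm h)
      · exact Or.inr (Or.inr ⟨s.symm h2, s.symm h1⟩)
      · exact Or.inr (Or.inl ⟨s.symm h2, s.symm h1⟩)
    · rintro a b c (h | ⟨h1, h2⟩ | ⟨h1, h2⟩) (g | ⟨g1, g2⟩ | ⟨g1, g2⟩)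
      · exact Or.inl (s.trans h g)
      · exact Or.inr (Or.inl ⟨s.trans h g1, g2⟩)
      · exact Or.inr (Or.inr ⟨s.trans h g1, g2⟩)
      · exact Or.inr (Or.inl ⟨h1, s.trans h2 g⟩)
      · exact Or.inl (s.trans h1 (s.trans (s.symm (s.trans h2 g1)) g2))
      · exact Or.inl (s.trans h1 g2)
      · exact Or.inr (Or.inr ⟨h1, s.trans h2 g⟩)
      · exact Or.inl (s.trans h1 g2)
      · exact Or.inl (s.trans h1 (s.trans (s.symm (s.trans h2 g1)) g2))

lemma sup_pair_le (s : Setoid X) (x y : X) : s ⊔ pairSetoid x y ≤ pairJoin s x y := by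
  apply sup_le
  · intro a b h; exact Or.inl h
  · rintro a b (rfl | ⟨rfl, rfl⟩ | ⟨rfl, rfl⟩)
    · exact Or.inl (s.refl a)
    · exact Or.inr (Or.inl ⟨s.refl _, s.refl _⟩)
    · exact Or.inr (Or.inr ⟨s.refl _, s.refl _⟩)

lemma pairSetoid_rel_left (x y : X) : (pairSetoid x y).r x y :=
  Or.inr (Or.inl ⟨rfl, rfl⟩)

lemma nc_le_of_le [Finite X] {r s : Setoid X} (h : r ≤ s) : nc s ≤ nc r :=
  Nat.card_le_card_of_surjective (Quotient.map' id (fun _ _ hab => h hab))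
    (fun c => Quotient.inductionOn' c (fun a => ⟨Quotient.mk r a, rfl⟩))

lemma eq_of_le_of_nc_le [Finite X] {r s : Setoid X} (h : r ≤ s) (h2 : nc r ≤ nc s) :
    r = s := by
  have h2' : Nat.card (Quotient r) ≤ Nat.card (Quotient s) := h2
  have hsurj : Function.Surjective (Quotient.map' id (fun _ _ hab => h hab) :
      Quotient r → Quotient s) :=
    fun c => Quotient.inductionOn' c (fun a => ⟨Quotient.mk r a, rfl⟩)
  have hbij : Function.Bijective (Quotient.map' id (fun _ _ hab => h hab) :
      Quotient r → Quotient s) := by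
    rw [Nat.bijective_iff_surjective_and_card]
    exact ⟨hsurj, le_antisymm h2' (Nat.card_le_card_of_surjective _ hsurj)⟩
  refine le_antisymm h ?_
  intro a b hab
  have : (Quotient.mk'' a : Quotient r) = Quotient.mk'' b := by
    apply hbij.injective
    simpa [Quotient.map'_mk''] using Quotient.sound' hab
  exact Quotient.exact' this

lemma nc_le_sup_pair_add_one [Finite X] (s : Setoid X) (x y : X) :
    nc s ≤ nc (s ⊔ pairSetoid x y) + 1 := by
  have hle : s ≤ s ⊔ pairSetoid x y := le_sup_left
  let f : Quotient s → Quotient (s ⊔ pairSetoid x y) :=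
    Quotient.map' id (fun _ _ hab => hle hab)
  let g : Quotient s → Quotient (s ⊔ pairSetoid x y) ⊕ Unit :=
    fun c => if c = Quotient.mk'' y then Sum.inr () else Sum.inl (f c)
  have hinj : Function.Injective g := by
    intro a b hab
    by_cases ha : a = Quotient.mk'' y <;> by_cases hb : b = Quotient.mk'' y
    · rw [ha, hb]
    · simp [g, ha, hb] at hab
    · simp [g, ha, hb] at hab
    · simp only [g, if_neg ha, if_neg hb, Sum.inl.injEq] at hab
      induction a using Quotient.inductionOn' with
      | h u =>
        induction b using Quotient.inductionOn' with
        | h v =>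
          have hrel : (s ⊔ pairSetoid x y).r u v := by
            apply Quotient.exact'
            simpa [f, Quotient.map'_mk''] using hab
          rcases sup_pair_le s x y hrel with h | ⟨h1, h2⟩ | ⟨h1, h2⟩
          · exact Quotient.sound' h
          · exact absurd (Quotient.sound' (s.symm h2)) hb
          · exact absurd (Quotient.sound' h1) ha
  calc nc s ≤ Nat.card (Quotient (s ⊔ pairSetoid x y) ⊕ Unit) :=
        Nat.card_le_card_of_injective g hinj
    _ = nc (s ⊔ pairSetoid x y) + 1 := by simp [Nat.card_sum, nc]

lemma defect_antitone [Finite X] (b : Setoid X) :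
    ∀ n (q p : Setoid X), nc q ≤ n → q ≤ p →
      (nc p : ℤ) - nc (p ⊔ b) ≤ (nc q : ℤ) - nc (q ⊔ b) := by
  intro n
  induction n with
  | zero =>
    intro q p hq hle
    have h1 := nc_le_of_le hle
    have h2 : nc (p ⊔ b) ≤ nc p := nc_le_of_le (le_sup_left)
    have h3 : nc (q ⊔ b) ≤ nc q := nc_le_of_le (le_sup_left)
    omega
  | succ n ih =>
    intro q p hq hle
    by_cases heq : q = p
    · subst heq; omega
    · have hnotle : ¬ p ≤ q := fun h => heq (le_antisymm hle h)
      rw [Setoid.le_def] at hnotle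
      push_neg at hnotle
      obtain ⟨x, y, hp, hq'⟩ := hnotle
      have hmp : q ⊔ pairSetoid x y ≤ p := by
        apply sup_le hle
        rintro a c (rfl | ⟨rfl, rfl⟩ | ⟨rfl, rfl⟩)
        · exact p.refl a
        · exact hp
        · exact p.symm hp
      have hqm : q ≤ q ⊔ pairSetoid x y := le_sup_left
      have hqltm : nc (q ⊔ pairSetoid x y) < nc q := by
        have hne : q ≠ q ⊔ pairSetoid x y := by
          intro h
          apply hq'
          have hm : (q ⊔ pairSetoid x y).r x y :=
            (le_sup_right : pairSetoid x y ≤ _) (pairSetoid_rel_left x y)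
          rw [h]; exact hm
        rcases lt_or_eq_of_le (nc_le_of_le hqm) with h | h
        · exact h
        · exact absurd (eq_of_le_of_nc_le hqm h.ge) hne
      have hstep : (nc (q ⊔ pairSetoid x y) : ℤ) - nc ((q ⊔ pairSetoid x y) ⊔ b)
          ≤ (nc q : ℤ) - nc (q ⊔ b) := by
        have h1 : nc (q ⊔ b) ≤ nc ((q ⊔ b) ⊔ pairSetoid x y) + 1 :=
          nc_le_sup_pair_add_one (q ⊔ b) x y
        have h2 : (q ⊔ b) ⊔ pairSetoid x y = (q ⊔ pairSetoid x y) ⊔ b := by ac_rfl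
        rw [h2] at h1
        have h3 : nc ((q ⊔ pairSetoid x y) ⊔ b) ≤ nc (q ⊔ b) :=
          nc_le_of_le (sup_le_sup_right hqm b)
        omega
      have := ih (q ⊔ pairSetoid x y) p (by omega) hmp
      omega


/-- If `p' ⊣_b p''` and `p'' ⊐_b p`, then `p'' = p ⊓ p'`, the coarsest
partition finer than both `p` and `p'`. -/
theorem statement6 {X : Type*} [Finite X] (b p p' p'' : Setoid X)
    (h1 : coarserComp b p' p'') (h2 : finerComp b p'' p) :
    p'' = p ⊓ p' := by
  obtain ⟨h1le, h1nc⟩ := h1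
  obtain ⟨h2le, h2nc⟩ := h2
  have hq : p'' ≤ p ⊓ p' := le_inf h2le h1le
  have hb1 : nc ((p ⊓ p') ⊔ b) = nc (p'' ⊔ b) := by
    have a1 : nc (p' ⊔ b) ≤ nc ((p ⊓ p') ⊔ b) :=
      nc_le_of_le (sup_le_sup_right inf_le_right b)
    have a2 : nc ((p ⊓ p') ⊔ b) ≤ nc (p'' ⊔ b) :=
      nc_le_of_le (sup_le_sup_right hq b)
    omega
  have hd := defect_antitone b (nc (p ⊓ p')) (p ⊓ p') p le_rfl inf_le_left
  exact eq_of_le_of_nc_le hq (by omega)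


end PartitionPaper
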